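/- Let n ≥ 1, β ∈ ℝ, and set ω_k = √(1 + 4 sin²(kπ/(2n+2))) for k = 1, …, n. On ℝ^{2n} with coordinates (x_1,…,x_n,y_1,…,y_n), let I_k = ½(x_k² + y_k²) and H̄ = Σ_{k=1}^n ω_k I_k + (β/(2(2n+2))) [ (9/4) Σ_{k=1}^n I_k²/ω_k² + 6 Σ_{1≤k<l≤n} I_k I_l/(ω_k ω_l) + 3 Σ_{1≤k<(n+1)/2} I_k I_{n+1−k}/(ω_k ω_{n+1−k}) + (3/4) I_{(n+1)/2}²/ω_{(n+1)/2}² ] (the last term present only when n is odd). Then {I_k, I_l} = 0 for all k, l and {I_k, H̄} = 0 for all k, so the fourth-order normal form of the KG lattice with n particles and fixed endpoints is completely integrable with the quadratic first integrals I_1, …, I_n. -/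

import Mathlib

noncomputable section

open Finset

/-- The Poisson bracket on `ℝ^{2n}` with coordinates `(x, y)`:
`{f,g} = Σ_k (∂f/∂x_k ∂g/∂y_k − ∂f/∂y_k ∂g/∂x_k)`. -/
def pb {n : ℕ} (f g : ((Fin n → ℝ) × (Fin n → ℝ)) → ℝ)
    (x : (Fin n → ℝ) × (Fin n → ℝ)) : ℝ :=
  ∑ k : Fin n,
    (fderiv ℝ f x (Pi.single k (1 : ℝ), 0) * fderiv ℝ g x (0, Pi.single k (1 : ℝ))
      - fderiv ℝ f x (0, Pi.single k (1 : ℝ)) * fderiv ℝ g x (Pi.single k (1 : ℝ), 0))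

/-- The coordinate with (1-based) label `j` is the component `(j−1) mod n` of `Fin n`. -/
def co (n : ℕ) (hn : 0 < n) (j : ℕ) : Fin n := ⟨(j - 1) % n, Nat.mod_lt _ hn⟩

/-- The action `I_k = ½(x_k² + y_k²)`. -/
def act (n : ℕ) (hn : 0 < n) (k : ℕ) (x : (Fin n → ℝ) × (Fin n → ℝ)) : ℝ :=
  (x.1 (co n hn k) ^ 2 + x.2 (co n hn k) ^ 2) / 2

/-- The normal-mode frequencies `ω_k = √(1 + 4 sin²(kπ/(2n+2)))` of the KG lattice
with `n` particles and fixed endpoints. -/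
def omg (n k : ℕ) : ℝ := Real.sqrt (1 + 4 * Real.sin (k * Real.pi / (2 * n + 2)) ^ 2)

/-- The fourth-order normal form `H̄` of the KG lattice with `n` particles and fixed
endpoints (the last term present only when `n` is odd). -/
def HbarFix (n : ℕ) (hn : 0 < n) (β : ℝ) (x : (Fin n → ℝ) × (Fin n → ℝ)) : ℝ :=
  ∑ k ∈ Finset.Icc 1 n, omg n k * act n hn k x
    + β / (2 * (2 * n + 2 : ℕ)) *
      ((9 / 4) * ∑ k ∈ Finset.Icc 1 n, act n hn k x ^ 2 / omg n k ^ 2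
        + 6 * ∑ k ∈ Finset.Icc 1 n, ∑ l ∈ Finset.Icc (k + 1) n,
            act n hn k x * act n hn l x / (omg n k * omg n l)
        + 3 * ∑ k ∈ (Finset.Icc 1 n).filter (fun k => 2 * k < n + 1),
            act n hn k x * act n hn (n + 1 - k) x / (omg n k * omg n (n + 1 - k))
        + (if n % 2 = 1 then
            (3 / 4) * act n hn ((n + 1) / 2) x ^ 2 / omg n ((n + 1) / 2) ^ 2
          else 0))

def Amap (n : ℕ) (x : (Fin n → ℝ) × (Fin n → ℝ)) : Fin n → ℝ :=
  fun j => (x.1 j ^ 2 + x.2 j ^ 2) / 2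

def DA (n : ℕ) (x : (Fin n → ℝ) × (Fin n → ℝ)) :
    ((Fin n → ℝ) × (Fin n → ℝ)) →L[ℝ] (Fin n → ℝ) :=
  ContinuousLinearMap.pi fun j =>
    x.1 j • ((ContinuousLinearMap.proj j).comp
        (ContinuousLinearMap.fst ℝ (Fin n → ℝ) (Fin n → ℝ)))
    + x.2 j • ((ContinuousLinearMap.proj j).comp
        (ContinuousLinearMap.snd ℝ (Fin n → ℝ) (Fin n → ℝ)))

lemma hasFDerivAt_Amap (n : ℕ) (x : (Fin n → ℝ) × (Fin n → ℝ)) :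
    HasFDerivAt (Amap n) (DA n x) x := by
  rw [hasFDerivAt_pi']
  intro j
  have h1 : HasFDerivAt (fun y : (Fin n → ℝ) × (Fin n → ℝ) => y.1 j)
      ((ContinuousLinearMap.proj j).comp
        (ContinuousLinearMap.fst ℝ (Fin n → ℝ) (Fin n → ℝ))) x :=
    ((ContinuousLinearMap.proj j).comp
        (ContinuousLinearMap.fst ℝ (Fin n → ℝ) (Fin n → ℝ))).hasFDerivAt
  have h2 : HasFDerivAt (fun y : (Fin n → ℝ) × (Fin n → ℝ) => y.2 j)
      ((ContinuousLinearMap.proj j).comp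
        (ContinuousLinearMap.snd ℝ (Fin n → ℝ) (Fin n → ℝ))) x :=
    ((ContinuousLinearMap.proj j).comp
        (ContinuousLinearMap.snd ℝ (Fin n → ℝ) (Fin n → ℝ))).hasFDerivAt
  have h := (((h1.mul h1).add (h2.mul h2)).const_mul ((2:ℝ)⁻¹))
  have hfun : (fun y : (Fin n → ℝ) × (Fin n → ℝ) =>
      (2:ℝ)⁻¹ * (y.1 j * y.1 j + y.2 j * y.2 j)) = fun y => Amap n y j := by
    funext y; simp [Amap]; ring
  replace h : HasFDerivAt (fun y : (Fin n → ℝ) × (Fin n → ℝ) =>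
      (2:ℝ)⁻¹ * (y.1 j * y.1 j + y.2 j * y.2 j)) _ x := h
  rw [hfun] at h
  refine h.congr_fderiv ?_
  apply ContinuousLinearMap.ext
  intro v
  simp [DA, ContinuousLinearMap.proj_pi]
  ring

lemma DA_apply_single1 (n : ℕ) (x : (Fin n → ℝ) × (Fin n → ℝ)) (c : Fin n) :
    DA n x (Pi.single c (1:ℝ), 0) = (Pi.single c (x.1 c) : Fin n → ℝ) := by
  funext j
  rcases eq_or_ne j c with h | h
  · subst h; simp [DA]
  · simp [DA, Pi.single_apply, h]

lemma DA_apply_single2 (n : ℕ) (x : (Fin n → ℝ) × (Fin n → ℝ)) (c : Fin n) :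
    DA n x (0, Pi.single c (1:ℝ)) = (Pi.single c (x.2 c) : Fin n → ℝ) := by
  funext j
  rcases eq_or_ne j c with h | h
  · subst h; simp [DA]
  · simp [DA, Pi.single_apply, h]

lemma fderiv_comp_Amap1 (n : ℕ) (G : (Fin n → ℝ) → ℝ)
    (x : (Fin n → ℝ) × (Fin n → ℝ)) (hG : DifferentiableAt ℝ G (Amap n x)) (c : Fin n) :
    fderiv ℝ (G ∘ Amap n) x (Pi.single c (1:ℝ), 0)
      = x.1 c * fderiv ℝ G (Amap n x) (Pi.single c (1:ℝ)) := by
  rw [fderiv_comp x hG (hasFDerivAt_Amap n x).differentiableAt,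
    (hasFDerivAt_Amap n x).fderiv]
  rw [ContinuousLinearMap.comp_apply, DA_apply_single1]
  have : (Pi.single c (x.1 c) : Fin n → ℝ) = x.1 c • (Pi.single c (1:ℝ) : Fin n → ℝ) := by
    funext j; rcases eq_or_ne j c with h | h <;> simp [Pi.single_apply, h]
  rw [this, map_smul, smul_eq_mul]

lemma fderiv_comp_Amap2 (n : ℕ) (G : (Fin n → ℝ) → ℝ)
    (x : (Fin n → ℝ) × (Fin n → ℝ)) (hG : DifferentiableAt ℝ G (Amap n x)) (c : Fin n) :
    fderiv ℝ (G ∘ Amap n) x (0, Pi.single c (1:ℝ))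
      = x.2 c * fderiv ℝ G (Amap n x) (Pi.single c (1:ℝ)) := by
  rw [fderiv_comp x hG (hasFDerivAt_Amap n x).differentiableAt,
    (hasFDerivAt_Amap n x).fderiv]
  rw [ContinuousLinearMap.comp_apply, DA_apply_single2]
  have : (Pi.single c (x.2 c) : Fin n → ℝ) = x.2 c • (Pi.single c (1:ℝ) : Fin n → ℝ) := by
    funext j; rcases eq_or_ne j c with h | h <;> simp [Pi.single_apply, h]
  rw [this, map_smul, smul_eq_mul]

lemma pb_comp_zero {n : ℕ} (G G' : (Fin n → ℝ) → ℝ) (x : (Fin n → ℝ) × (Fin n → ℝ))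
    (hG : DifferentiableAt ℝ G (Amap n x)) (hG' : DifferentiableAt ℝ G' (Amap n x)) :
    pb (G ∘ Amap n) (G' ∘ Amap n) x = 0 := by
  unfold pb
  apply Finset.sum_eq_zero
  intro c _
  rw [fderiv_comp_Amap1 n G x hG c, fderiv_comp_Amap2 n G x hG c,
    fderiv_comp_Amap1 n G' x hG' c, fderiv_comp_Amap2 n G' x hG' c]
  ring

/-- `HbarFix` as a function of the actions. -/
def Fb (n : ℕ) (hn : 0 < n) (β : ℝ) (I : Fin n → ℝ) : ℝ :=
  ∑ k ∈ Finset.Icc 1 n, omg n k * I (co n hn k)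
    + β / (2 * (2 * n + 2 : ℕ)) *
      ((9 / 4) * ∑ k ∈ Finset.Icc 1 n, I (co n hn k) ^ 2 / omg n k ^ 2
        + 6 * ∑ k ∈ Finset.Icc 1 n, ∑ l ∈ Finset.Icc (k + 1) n,
            I (co n hn k) * I (co n hn l) / (omg n k * omg n l)
        + 3 * ∑ k ∈ (Finset.Icc 1 n).filter (fun k => 2 * k < n + 1),
            I (co n hn k) * I (co n hn (n + 1 - k)) / (omg n k * omg n (n + 1 - k))
        + (if n % 2 = 1 then
            (3 / 4) * I (co n hn ((n + 1) / 2)) ^ 2 / omg n ((n + 1) / 2) ^ 2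
          else 0))

lemma HbarFix_eq (n : ℕ) (hn : 0 < n) (β : ℝ) :
    HbarFix n hn β = Fb n hn β ∘ Amap n := rfl

lemma act_eq (n : ℕ) (hn : 0 < n) (k : ℕ) :
    act n hn k = (fun I : Fin n → ℝ => I (co n hn k)) ∘ Amap n := rfl

lemma differentiable_eval {n : ℕ} (c : Fin n) :
    Differentiable ℝ (fun I : Fin n → ℝ => I c) :=
  fun _ => (differentiable_apply c).differentiableAt

lemma differentiable_Fb (n : ℕ) (hn : 0 < n) (β : ℝ) :
    Differentiable ℝ (Fb n hn β) := by
  unfold Fb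
  split_ifs <;> fun_prop

/-- For `n ≥ 1`, the actions `I_1, …, I_n` pairwise Poisson-commute
and each Poisson-commutes with the fourth-order normal form `H̄` of the KG lattice with
`n` particles and fixed endpoints; hence this normal form is completely integrable with
the quadratic first integrals `I_1, …, I_n`. -/
theorem fixed_endpoints_normal_form_integrable (n : ℕ) (hn : 1 ≤ n) (hn0 : 0 < n)
    (β : ℝ) :
    (∀ k l, 1 ≤ k → k ≤ n → 1 ≤ l → l ≤ n →
      ∀ x, pb (act n hn0 k) (act n hn0 l) x = 0) ∧
    (∀ k, 1 ≤ k → k ≤ n → ∀ x, pb (act n hn0 k) (HbarFix n hn0 β) x = 0) := by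
  constructor
  · intro k l _ _ _ _ x
    rw [act_eq n hn0 k, act_eq n hn0 l]
    exact pb_comp_zero _ _ x (differentiable_eval _ _) (differentiable_eval _ _)
  · intro k _ _ x
    rw [act_eq n hn0 k, HbarFix_eq n hn0 β]
    exact pb_comp_zero _ _ x (differentiable_eval _ _)
      ((differentiable_Fb n hn0 β) _)

end
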